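/- Let n ≥ 1, m > 0, γ ∈ (0,1/2], p ∈ [0,1]^n and q ∈ [γ, 1/2]^n. Let W_1, ..., W_n be independent random variables with W_i distributed as Poisson(m·p_i), and set W = ∑_{i=1}^n ((W_i − m·q_i)² − W_i)/(q_i(1 − q_i)). Then Var[W] ≤ 16·n·m² + (32/γ + 16·√(2n)·m)·E[W] + (32/√γ)·E[W]^{3/2}, where E[W] = m²·∑_{i=1}^n (p_i − q_i)²/(q_i(1 − q_i)). -/

import Mathlib

open MeasureTheory ProbabilityTheory

/-- The Poisson probability mass function with rate `lam`. -/
noncomputable def poissonPMF (lam : ℝ) (k : ℕ) : ℝ :=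
  Real.exp (-lam) * lam ^ k / (Nat.factorial k)

namespace PoissonAux

lemma pmf_nonneg {lam : ℝ} (hl : 0 ≤ lam) (k : ℕ) : 0 ≤ _root_.poissonPMF lam k := by
  unfold _root_.poissonPMF; positivity

noncomputable def P (r k : ℕ) : ℝ := ∏ i ∈ Finset.range r, ((k : ℝ) - i)

lemma P_nonneg (r k : ℕ) : 0 ≤ P r k := by
  rcases lt_or_ge k r with h | h
  · rw [P, Finset.prod_eq_zero (Finset.mem_range.2 h) (by simp)]
  · exact Finset.prod_nonneg fun i hi => by
      have : i < r := Finset.mem_range.1 hi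
      have : (i : ℝ) ≤ k := by exact_mod_cast le_of_lt (lt_of_lt_of_le this h)
      linarith

lemma P_eq_zero {r k : ℕ} (h : k < r) : P r k = 0 :=
  Finset.prod_eq_zero (Finset.mem_range.2 h) (by simp)

lemma P_mul_factorial (j r : ℕ) : P r (j + r) * (Nat.factorial j : ℝ) = (Nat.factorial (j + r) : ℝ) := by
  induction r generalizing j with
  | zero => simp [P]
  | succ r ih =>
    have h1 : P (r + 1) (j + (r + 1)) = P r ((j + 1) + r) * ((j : ℝ) + 1) := by
      rw [P, Finset.prod_range_succ]
      have : ((j + (r + 1) : ℕ) : ℝ) - (r : ℝ) = (j : ℝ) + 1 := by push_cast; ring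
      rw [this]
      congr 1
      apply Finset.prod_congr rfl
      intro i _
      congr 1
      push_cast; ring
    rw [h1]
    have h2 := ih (j + 1)
    have : ((Nat.factorial (j + 1) : ℝ)) = ((j : ℝ) + 1) * Nat.factorial j := by
      rw [Nat.factorial_succ]; push_cast; ring
    calc P r ((j + 1) + r) * ((j : ℝ) + 1) * (Nat.factorial j : ℝ)
        = P r ((j + 1) + r) * (Nat.factorial (j + 1) : ℝ) := by rw [this]; ring
      _ = (Nat.factorial ((j + 1) + r) : ℝ) := h2
      _ = (Nat.factorial (j + (r + 1)) : ℝ) := by ring_nf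

lemma hasSum_P {lam : ℝ} (hl : 0 ≤ lam) (r : ℕ) :
    HasSum (fun k => _root_.poissonPMF lam k * P r k) (lam ^ r) := by
  have hexp : HasSum (fun j : ℕ => lam ^ j / (Nat.factorial j : ℝ)) (Real.exp lam) := by
    rw [Real.exp_eq_exp_ℝ]
    exact NormedSpace.expSeries_div_hasSum_exp lam
  have h2 : HasSum (fun j : ℕ => Real.exp (-lam) * lam ^ r * (lam ^ j / (Nat.factorial j : ℝ)))
      (Real.exp (-lam) * lam ^ r * Real.exp lam) := hexp.mul_left _
  have hval : Real.exp (-lam) * lam ^ r * Real.exp lam = lam ^ r := by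
    rw [Real.exp_neg]
    field_simp
  rw [hval] at h2
  have hinj : Function.Injective (fun j : ℕ => j + r) := add_left_injective r
  rw [← Function.Injective.hasSum_iff hinj ?_]
  · convert h2 using 1
    funext j
    show _root_.poissonPMF lam (j + r) * P r (j + r) = _
    unfold _root_.poissonPMF
    have hf := P_mul_factorial j r
    have hne : (Nat.factorial (j + r) : ℝ) ≠ 0 := by
      exact_mod_cast Nat.factorial_ne_zero (j + r)
    have hne2 : (Nat.factorial j : ℝ) ≠ 0 := by
      exact_mod_cast Nat.factorial_ne_zero j
    have hP : P r (j + r) = (Nat.factorial (j + r) : ℝ) / (Nat.factorial j : ℝ) := by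
      field_simp [← hf]
      exact hf
    rw [hP, pow_add]
    field_simp
  · intro k hk
    have hkr : k < r := by
      by_contra h
      push_neg at h
      exact hk ⟨k - r, by simpa using Nat.sub_add_cancel h⟩
    rw [P_eq_zero hkr, mul_zero]

variable {Ω : Type*} [MeasurableSpace Ω] {μ : Measure Ω} [IsProbabilityMeasure μ]

lemma map_singleton {W : Ω → ℕ} (hW : Measurable W) (k : ℕ) :
    (μ.map W) {k} = μ (W ⁻¹' {k}) :=
  Measure.map_apply hW (measurableSet_singleton k)

lemma integrable_comp {lam : ℝ} (hl : 0 ≤ lam) {W : Ω → ℕ} (hW : Measurable W)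
    (hlaw : ∀ k, μ (W ⁻¹' {k}) = ENNReal.ofReal (_root_.poissonPMF lam k))
    {f : ℕ → ℝ} (hsum : Summable (fun k => _root_.poissonPMF lam k * |f k|)) :
    Integrable (fun ω => f (W ω)) μ := by
  have hfm : AEStronglyMeasurable f (μ.map W) :=
    (measurable_from_nat (f := f)).aestronglyMeasurable
  rw [show (fun ω => f (W ω)) = f ∘ W from rfl,
    ← integrable_map_measure hfm hW.aemeasurable]
  refine ⟨hfm, ?_⟩
  rw [HasFiniteIntegral, lintegral_countable']
  have heq : ∀ k : ℕ, ‖f k‖ₑ * (μ.map W) {k}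
      = ENNReal.ofReal (_root_.poissonPMF lam k * |f k|) := by
    intro k
    rw [map_singleton hW, hlaw k, ← ofReal_norm, Real.norm_eq_abs,
      ← ENNReal.ofReal_mul (abs_nonneg _), mul_comm]
  simp_rw [heq]
  rw [← ENNReal.ofReal_tsum_of_nonneg (fun k => mul_nonneg (pmf_nonneg hl k) (abs_nonneg _)) hsum]
  exact ENNReal.ofReal_lt_top

lemma integral_comp {lam : ℝ} (hl : 0 ≤ lam) {W : Ω → ℕ} (hW : Measurable W)
    (hlaw : ∀ k, μ (W ⁻¹' {k}) = ENNReal.ofReal (_root_.poissonPMF lam k))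
    {f : ℕ → ℝ} (hsum : Summable (fun k => _root_.poissonPMF lam k * |f k|))
    {S : ℝ} (hS : HasSum (fun k => _root_.poissonPMF lam k * f k) S) :
    ∫ ω, f (W ω) ∂μ = S := by
  have hfm : AEStronglyMeasurable f (μ.map W) :=
    (measurable_from_nat (f := f)).aestronglyMeasurable
  have hint : Integrable f (μ.map W) := by
    rw [integrable_map_measure hfm hW.aemeasurable]
    exact integrable_comp hl hW hlaw hsum
  rw [← integral_map hW.aemeasurable hfm, integral_countable hint]
  have heq : ∀ k : ℕ, (μ.map W).real {k} • f k = _root_.poissonPMF lam k * f k := by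
    intro k
    rw [measureReal_def, map_singleton hW, hlaw k, ENNReal.toReal_ofReal (pmf_nonneg hl k), smul_eq_mul]
  simp_rw [heq]
  exact hS.tsum_eq

section Moments

variable {lam : ℝ}

lemma hasSum_g (hl : 0 ≤ lam) (a : ℝ) :
    HasSum (fun k : ℕ => _root_.poissonPMF lam k * (((k : ℝ) - a) ^ 2 - k)) ((lam - a) ^ 2) := by
  have h := ((hasSum_P hl 2).add ((hasSum_P hl 1).mul_left (-2 * a))).add
    ((hasSum_P hl 0).mul_left (a ^ 2))
  have hfun : (fun k : ℕ => _root_.poissonPMF lam k * (((k : ℝ) - a) ^ 2 - k))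
      = fun k : ℕ => (_root_.poissonPMF lam k * P 2 k
          + -2 * a * (_root_.poissonPMF lam k * P 1 k))
          + a ^ 2 * (_root_.poissonPMF lam k * P 0 k) := by
    funext k
    simp only [P, Finset.prod_range_succ, Finset.prod_range_zero]
    push_cast
    ring
  have hval : (lam - a) ^ 2 = (lam ^ 2 + -2 * a * lam ^ 1) + a ^ 2 * lam ^ 0 := by ring
  rw [hfun, hval]
  exact h

lemma hasSum_g2 (hl : 0 ≤ lam) (a : ℝ) :
    HasSum (fun k : ℕ => _root_.poissonPMF lam k * (((k : ℝ) - a) ^ 2 - k) ^ 2)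
      ((lam - a) ^ 4 + 2 * lam ^ 2 + 4 * lam * (lam - a) ^ 2) := by
  have h := ((((hasSum_P hl 4).add ((hasSum_P hl 3).mul_left (4 - 4 * a))).add
    ((hasSum_P hl 2).mul_left (2 - 8 * a + 6 * a ^ 2))).add
    ((hasSum_P hl 1).mul_left (4 * a ^ 2 - 4 * a ^ 3))).add
    ((hasSum_P hl 0).mul_left (a ^ 4))
  have hfun : (fun k : ℕ => _root_.poissonPMF lam k * (((k : ℝ) - a) ^ 2 - k) ^ 2)
      = fun k : ℕ => (((_root_.poissonPMF lam k * P 4 k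
          + (4 - 4 * a) * (_root_.poissonPMF lam k * P 3 k))
          + (2 - 8 * a + 6 * a ^ 2) * (_root_.poissonPMF lam k * P 2 k))
          + (4 * a ^ 2 - 4 * a ^ 3) * (_root_.poissonPMF lam k * P 1 k))
          + a ^ 4 * (_root_.poissonPMF lam k * P 0 k) := by
    funext k
    simp only [P, Finset.prod_range_succ, Finset.prod_range_zero]
    push_cast
    ring
  have hval : (lam - a) ^ 4 + 2 * lam ^ 2 + 4 * lam * (lam - a) ^ 2
      = (((lam ^ 4 + (4 - 4 * a) * lam ^ 3) + (2 - 8 * a + 6 * a ^ 2) * lam ^ 2)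
          + (4 * a ^ 2 - 4 * a ^ 3) * lam ^ 1) + a ^ 4 * lam ^ 0 := by ring
  rw [hfun, hval]
  exact h

lemma summable_abs_g (hl : 0 ≤ lam) (a : ℝ) :
    Summable (fun k : ℕ => _root_.poissonPMF lam k * |((k : ℝ) - a) ^ 2 - k|) := by
  have hB : Summable (fun k : ℕ => _root_.poissonPMF lam k
      * (P 2 k + (2 * |a| + 2) * P 1 k + a ^ 2 * P 0 k)) := by
    have h := (((hasSum_P hl 2).add ((hasSum_P hl 1).mul_left (2 * |a| + 2))).add
      ((hasSum_P hl 0).mul_left (a ^ 2))).summable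
    refine h.congr fun k => ?_
    ring
  refine Summable.of_nonneg_of_le (fun k => mul_nonneg (pmf_nonneg hl k) (abs_nonneg _))
    (fun k => ?_) hB
  refine mul_le_mul_of_nonneg_left ?_ (pmf_nonneg hl k)
  have hk : (0 : ℝ) ≤ (k : ℝ) := Nat.cast_nonneg k
  have h1 : |((k : ℝ) - a) ^ 2 - k| ≤ ((k : ℝ) - a) ^ 2 + k := by
    refine (abs_sub _ _).trans ?_
    rw [abs_of_nonneg (sq_nonneg _), abs_of_nonneg hk]
  have h2 : ((k : ℝ) - a) ^ 2 + k ≤ P 2 k + (2 * |a| + 2) * P 1 k + a ^ 2 * P 0 k := by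
    simp only [P, Finset.prod_range_succ, Finset.prod_range_zero]
    push_cast
    nlinarith [le_abs_self a, neg_abs_le a, hk]
  linarith

lemma summable_abs_g2 (hl : 0 ≤ lam) (a : ℝ) :
    Summable (fun k : ℕ => _root_.poissonPMF lam k * |(((k : ℝ) - a) ^ 2 - k) ^ 2|) := by
  refine (hasSum_g2 hl a).summable.congr fun k => ?_
  rw [abs_of_nonneg (sq_nonneg _)]

end Moments

lemma memLp_g {lam : ℝ} (hl : 0 ≤ lam) {W : Ω → ℕ} (hW : Measurable W)
    (hlaw : ∀ k, μ (W ⁻¹' {k}) = ENNReal.ofReal (_root_.poissonPMF lam k)) (a : ℝ) :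
    MemLp (fun ω => ((W ω : ℝ) - a) ^ 2 - (W ω : ℝ)) 2 μ := by
  have hasm : AEStronglyMeasurable (fun ω => ((W ω : ℝ) - a) ^ 2 - (W ω : ℝ)) μ := by
    have : Measurable (fun ω => ((W ω : ℝ) - a) ^ 2 - (W ω : ℝ)) :=
      (measurable_from_nat (f := fun k : ℕ => ((k : ℝ) - a) ^ 2 - k)).comp hW
    exact this.aestronglyMeasurable
  rw [memLp_two_iff_integrable_sq hasm]
  exact integrable_comp hl hW hlaw (f := fun k : ℕ => (((k : ℝ) - a) ^ 2 - k) ^ 2)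
    (summable_abs_g2 hl a)

lemma variance_g {lam : ℝ} (hl : 0 ≤ lam) {W : Ω → ℕ} (hW : Measurable W)
    (hlaw : ∀ k, μ (W ⁻¹' {k}) = ENNReal.ofReal (_root_.poissonPMF lam k)) (a : ℝ) :
    variance (fun ω => ((W ω : ℝ) - a) ^ 2 - (W ω : ℝ)) μ
      = 2 * lam ^ 2 + 4 * lam * (lam - a) ^ 2 := by
  rw [variance_eq_sub (memLp_g hl hW hlaw a)]
  have h1 : μ[(fun ω => ((W ω : ℝ) - a) ^ 2 - (W ω : ℝ)) ^ 2]
      = (lam - a) ^ 4 + 2 * lam ^ 2 + 4 * lam * (lam - a) ^ 2 := by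
    have : ((fun ω => ((W ω : ℝ) - a) ^ 2 - (W ω : ℝ)) ^ 2)
        = fun ω => (fun k : ℕ => (((k : ℝ) - a) ^ 2 - k) ^ 2) (W ω) := by
      funext ω; simp [Pi.pow_apply]
    rw [this]
    exact integral_comp hl hW hlaw (summable_abs_g2 hl a) (hasSum_g2 hl a)
  have h2 : μ[fun ω => ((W ω : ℝ) - a) ^ 2 - (W ω : ℝ)] = (lam - a) ^ 2 :=
    integral_comp hl hW hlaw (summable_abs_g hl a) (hasSum_g hl a)
  rw [h1, h2]
  ring

end PoissonAux

namespace PoissonAux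

lemma rpow_three_halves {x : ℝ} (hx : 0 ≤ x) : x ^ ((3:ℝ)/2) = x * Real.sqrt x := by
  rw [show (3:ℝ)/2 = 1 + 1/2 by norm_num, Real.rpow_add' hx (by norm_num), Real.rpow_one,
    ← Real.sqrt_eq_rpow]

lemma sum_rpow_le {n : ℕ} (t : Fin n → ℝ) (ht : ∀ i, 0 ≤ t i) :
    ∑ i, t i ^ ((3:ℝ)/2) ≤ (∑ i, t i) ^ ((3:ℝ)/2) := by
  set S := ∑ i, t i with hS
  have hS0 : 0 ≤ S := Finset.sum_nonneg fun i _ => ht i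
  have hle : ∀ i, t i ≤ S := fun i =>
    Finset.single_le_sum (fun j _ => ht j) (Finset.mem_univ i)
  rw [rpow_three_halves hS0]
  calc ∑ i, t i ^ ((3:ℝ)/2) = ∑ i, t i * Real.sqrt (t i) := by
        exact Finset.sum_congr rfl fun i _ => rpow_three_halves (ht i)
    _ ≤ ∑ i, t i * Real.sqrt S := by
        refine Finset.sum_le_sum fun i _ => ?_
        exact mul_le_mul_of_nonneg_left (Real.sqrt_le_sqrt (hle i)) (ht i)
    _ = S * Real.sqrt S := by rw [← Finset.sum_mul]

lemma per_coord_core {m γ qq u Δ : ℝ} (hm : 0 < m) (hγ0 : 0 < γ) (hu0 : 0 < u)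
    (hq0 : 0 < qq) (hqu : qq * u ≤ 2) (huγ : γ * u ≤ 2)
    (hsu' : Real.sqrt u ≤ Real.sqrt 2 / Real.sqrt γ) :
    u ^ 2 * (2 * (m * qq + Δ) ^ 2 + 4 * (m * qq + Δ) * Δ ^ 2)
      ≤ 16 * m ^ 2 + (8 / γ + 8 * m) * (Δ ^ 2 * u)
        + 4 * Real.sqrt 2 / Real.sqrt γ * (Δ ^ 2 * u * (|Δ| * Real.sqrt u)) := by
  have ht0 : 0 ≤ Δ ^ 2 * u := mul_nonneg (sq_nonneg Δ) hu0.le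
  have hA : 2 * (m * qq + Δ) ^ 2 * u ^ 2 ≤ 16 * m ^ 2 + 8 / γ * (Δ ^ 2 * u) := by
    have h8 : 4 * Δ ^ 2 * u ^ 2 ≤ 8 / γ * (Δ ^ 2 * u) := by
      rw [div_mul_eq_mul_div, le_div_iff₀ hγ0]
      nlinarith [mul_le_mul_of_nonneg_left huγ ht0]
    have h16 : 2 * (m * qq + Δ) ^ 2 * u ^ 2
        ≤ 4 * (m * qq) ^ 2 * u ^ 2 + 4 * Δ ^ 2 * u ^ 2 := by
      nlinarith [mul_nonneg (sq_nonneg (m * qq - Δ)) (sq_nonneg u)]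
    have hq4 : (qq * u) * (qq * u) ≤ 4 := by nlinarith [mul_nonneg hq0.le hu0.le]
    have h16b : 4 * (m * qq) ^ 2 * u ^ 2 ≤ 16 * m ^ 2 := by
      nlinarith [mul_le_mul_of_nonneg_left hq4 (sq_nonneg m)]
    linarith
  have hB : 4 * (m * qq) * Δ ^ 2 * u ^ 2 ≤ 8 * m * (Δ ^ 2 * u) := by
    nlinarith [mul_le_mul_of_nonneg_left hqu (mul_nonneg (mul_nonneg hm.le (sq_nonneg Δ)) hu0.le)]
  have hC : 4 * Δ ^ 3 * u ^ 2
      ≤ 4 * Real.sqrt 2 / Real.sqrt γ * (Δ ^ 2 * u * (|Δ| * Real.sqrt u)) := by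
    have h1 : Δ ^ 3 ≤ Δ ^ 2 * |Δ| := by
      calc Δ ^ 3 ≤ |Δ ^ 3| := le_abs_self _
        _ = |Δ| ^ 3 := abs_pow Δ 3
        _ = Δ ^ 2 * |Δ| := by rw [pow_succ, sq_abs]
    have h2 : 4 * Δ ^ 3 * u ^ 2 ≤ 4 * (Δ ^ 2 * |Δ|) * u ^ 2 := by
      nlinarith [sq_nonneg u, h1]
    have hueq : u ^ 2 = u * (Real.sqrt u * Real.sqrt u) := by
      rw [Real.mul_self_sqrt hu0.le]; ring
    have h3 : 4 * (Δ ^ 2 * |Δ|) * u ^ 2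
        ≤ 4 * (Δ ^ 2 * |Δ|) * (u * Real.sqrt u) * (Real.sqrt 2 / Real.sqrt γ) := by
      rw [hueq]
      have hnn : 0 ≤ 4 * (Δ ^ 2 * |Δ|) * (u * Real.sqrt u) := by positivity
      calc 4 * (Δ ^ 2 * |Δ|) * (u * (Real.sqrt u * Real.sqrt u))
          = 4 * (Δ ^ 2 * |Δ|) * (u * Real.sqrt u) * Real.sqrt u := by ring
        _ ≤ 4 * (Δ ^ 2 * |Δ|) * (u * Real.sqrt u) * (Real.sqrt 2 / Real.sqrt γ) :=
            mul_le_mul_of_nonneg_left hsu' hnn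
    calc 4 * Δ ^ 3 * u ^ 2 ≤ 4 * (Δ ^ 2 * |Δ|) * u ^ 2 := h2
      _ ≤ 4 * (Δ ^ 2 * |Δ|) * (u * Real.sqrt u) * (Real.sqrt 2 / Real.sqrt γ) := h3
      _ = 4 * Real.sqrt 2 / Real.sqrt γ * (Δ ^ 2 * u * (|Δ| * Real.sqrt u)) := by ring
  nlinarith [hA, hB, hC]

lemma per_coord_bound {m γ pp qq : ℝ} (hm : 0 < m) (hγ0 : 0 < γ) (hγh : γ ≤ 1/2)
    (hp0 : 0 ≤ pp) (hq1 : γ ≤ qq) (hq2 : qq ≤ 1/2) :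
    ((qq * (1 - qq))⁻¹) ^ 2
        * (2 * (m * pp) ^ 2 + 4 * (m * pp) * (m * pp - m * qq) ^ 2)
      ≤ 16 * m ^ 2 + (8 / γ + 8 * m) * (m ^ 2 * (pp - qq) ^ 2 / (qq * (1 - qq)))
        + (4 * Real.sqrt 2 / Real.sqrt γ)
            * (m ^ 2 * (pp - qq) ^ 2 / (qq * (1 - qq))) ^ ((3:ℝ)/2) := by
  have hq0 : 0 < qq := lt_of_lt_of_le hγ0 hq1
  have hc0 : 0 < qq * (1 - qq) := by nlinarith
  have hu0 : 0 < (qq * (1 - qq))⁻¹ := inv_pos.2 hc0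
  have hcu : (qq * (1 - qq)) * (qq * (1 - qq))⁻¹ = 1 := mul_inv_cancel₀ hc0.ne'
  have hqu : qq * (qq * (1 - qq))⁻¹ ≤ 2 := by
    have hq2c : qq ≤ 2 * (qq * (1 - qq)) := by nlinarith
    calc qq * (qq * (1 - qq))⁻¹ ≤ 2 * (qq * (1 - qq)) * (qq * (1 - qq))⁻¹ :=
          mul_le_mul_of_nonneg_right hq2c hu0.le
      _ = 2 := by rw [mul_assoc, hcu, mul_one]
  have huγ : γ * (qq * (1 - qq))⁻¹ ≤ 2 := by
    have hγ2c : γ ≤ 2 * (qq * (1 - qq)) := by nlinarith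
    calc γ * (qq * (1 - qq))⁻¹ ≤ 2 * (qq * (1 - qq)) * (qq * (1 - qq))⁻¹ :=
          mul_le_mul_of_nonneg_right hγ2c hu0.le
      _ = 2 := by rw [mul_assoc, hcu, mul_one]
  have hγs : 0 < Real.sqrt γ := Real.sqrt_pos.2 hγ0
  have hsu' : Real.sqrt ((qq * (1 - qq))⁻¹) ≤ Real.sqrt 2 / Real.sqrt γ := by
    rw [le_div_iff₀ hγs, ← Real.sqrt_mul (le_of_lt hu0)]
    have h2 : (qq * (1 - qq))⁻¹ * γ ≤ 2 := by nlinarith [huγ]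
    calc Real.sqrt ((qq * (1 - qq))⁻¹ * γ) ≤ Real.sqrt 2 := Real.sqrt_le_sqrt h2
      _ = Real.sqrt 2 := rfl
  have key := per_coord_core (Δ := m * (pp - qq)) hm hγ0 hu0 hq0 hqu huγ hsu'
  have ht0 : 0 ≤ m ^ 2 * (pp - qq) ^ 2 / (qq * (1 - qq)) := by positivity
  have htpow : (m ^ 2 * (pp - qq) ^ 2 / (qq * (1 - qq))) ^ ((3:ℝ)/2)
      = (m * (pp - qq)) ^ 2 * (qq * (1 - qq))⁻¹
        * (|m * (pp - qq)| * Real.sqrt ((qq * (1 - qq))⁻¹)) := by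
    rw [rpow_three_halves ht0]
    rw [show m ^ 2 * (pp - qq) ^ 2 / (qq * (1 - qq))
        = (m * (pp - qq)) ^ 2 * (qq * (1 - qq))⁻¹ by ring]
    rw [Real.sqrt_mul (sq_nonneg (m * (pp - qq))), Real.sqrt_sq_eq_abs]
  calc ((qq * (1 - qq))⁻¹) ^ 2
        * (2 * (m * pp) ^ 2 + 4 * (m * pp) * (m * pp - m * qq) ^ 2)
      = ((qq * (1 - qq))⁻¹) ^ 2 * (2 * (m * qq + m * (pp - qq)) ^ 2
          + 4 * (m * qq + m * (pp - qq)) * (m * (pp - qq)) ^ 2) := by ring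
    _ ≤ 16 * m ^ 2 + (8 / γ + 8 * m) * ((m * (pp - qq)) ^ 2 * (qq * (1 - qq))⁻¹)
        + 4 * Real.sqrt 2 / Real.sqrt γ * ((m * (pp - qq)) ^ 2 * (qq * (1 - qq))⁻¹
            * (|m * (pp - qq)| * Real.sqrt ((qq * (1 - qq))⁻¹))) := key
    _ = 16 * m ^ 2 + (8 / γ + 8 * m) * (m ^ 2 * (pp - qq) ^ 2 / (qq * (1 - qq)))
        + (4 * Real.sqrt 2 / Real.sqrt γ)
            * (m ^ 2 * (pp - qq) ^ 2 / (qq * (1 - qq))) ^ ((3:ℝ)/2) := by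
      rw [htpow]; ring

end PoissonAux

theorem stmt5 {Ω : Type*} [MeasurableSpace Ω] (μ : Measure Ω) [IsProbabilityMeasure μ]
    (n : ℕ) (hn : 1 ≤ n) (m γ : ℝ) (hm : 0 < m) (hγ : γ ∈ Set.Ioc (0:ℝ) (1/2))
    (p q : Fin n → ℝ) (hp : ∀ i, p i ∈ Set.Icc (0:ℝ) 1)
    (hq : ∀ i, q i ∈ Set.Icc γ (1/2))
    (W : Fin n → Ω → ℕ) (hmeas : ∀ i, Measurable (W i))
    (hindep : iIndepFun W μ)
    (hlaw : ∀ i k, μ (W i ⁻¹' {k}) = ENNReal.ofReal (poissonPMF (m * p i) k)) :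
    variance (fun ω => ∑ i, (((W i ω : ℝ) - m * q i) ^ 2 - (W i ω : ℝ)) / (q i * (1 - q i))) μ
      ≤ 16 * n * m ^ 2
        + (32 / γ + 16 * Real.sqrt (2 * n) * m)
            * (m ^ 2 * ∑ i, (p i - q i) ^ 2 / (q i * (1 - q i)))
        + (32 / Real.sqrt γ)
            * (m ^ 2 * ∑ i, (p i - q i) ^ 2 / (q i * (1 - q i))) ^ ((3:ℝ)/2) := by
  classical
  obtain ⟨hγ0, hγh⟩ := hγ
  have hl0 : ∀ i, 0 ≤ m * p i := fun i => mul_nonneg hm.le (hp i).1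
  have hc0 : ∀ i, 0 < q i * (1 - q i) := by
    intro i
    have h1 := (hq i).1; have h2 := (hq i).2
    nlinarith
  set X : Fin n → Ω → ℝ :=
    fun i ω => (((W i ω : ℝ) - m * q i) ^ 2 - (W i ω : ℝ)) / (q i * (1 - q i)) with hXdef
  have hXsmul : ∀ i, X i = ((q i * (1 - q i))⁻¹ : ℝ)
      • (fun ω => ((W i ω : ℝ) - m * q i) ^ 2 - (W i ω : ℝ)) := by
    intro i; funext ω
    simp [hXdef, div_eq_inv_mul]
  have hX : ∀ i, MemLp (X i) 2 μ := by
    intro i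
    rw [hXsmul i]
    exact (PoissonAux.memLp_g (hl0 i) (hmeas i) (hlaw i) (m * q i)).const_smul _
  have hpair : Set.Pairwise ↑(Finset.univ : Finset (Fin n))
      (fun i j => IndepFun (X i) (X j) μ) := by
    intro i _ j _ hij
    exact (hindep.indepFun hij).comp
      (measurable_from_nat (f := fun k : ℕ =>
        (((k : ℝ) - m * q i) ^ 2 - (k : ℝ)) / (q i * (1 - q i))))
      (measurable_from_nat (f := fun k : ℕ =>
        (((k : ℝ) - m * q j) ^ 2 - (k : ℝ)) / (q j * (1 - q j))))
  have hsum_eq : (fun ω => ∑ i, (((W i ω : ℝ) - m * q i) ^ 2 - (W i ω : ℝ)) / (q i * (1 - q i)))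
      = ∑ i, X i := by
    funext ω; rw [Finset.sum_apply]
  rw [hsum_eq, IndepFun.variance_sum (fun i _ => hX i) hpair]
  have hvar : ∀ i, variance (X i) μ = ((q i * (1 - q i))⁻¹) ^ 2
      * (2 * (m * p i) ^ 2 + 4 * (m * p i) * (m * p i - m * q i) ^ 2) := by
    intro i
    rw [hXsmul i, variance_smul,
      PoissonAux.variance_g (hl0 i) (hmeas i) (hlaw i) (m * q i)]
  -- abbreviations
  set t : Fin n → ℝ := fun i => m ^ 2 * (p i - q i) ^ 2 / (q i * (1 - q i)) with htdef
  have ht0 : ∀ i, 0 ≤ t i := fun i => div_nonneg (by positivity) (hc0 i).le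
  have hE : m ^ 2 * ∑ i, (p i - q i) ^ 2 / (q i * (1 - q i)) = ∑ i, t i := by
    rw [Finset.mul_sum]
    exact Finset.sum_congr rfl fun i _ => by rw [htdef]; ring
  have hE0 : 0 ≤ ∑ i, t i := Finset.sum_nonneg fun i _ => ht0 i
  have hγs : 0 < Real.sqrt γ := Real.sqrt_pos.2 hγ0
  calc ∑ i, variance (X i) μ
      ≤ ∑ i, (16 * m ^ 2 + (8 / γ + 8 * m) * t i
          + (4 * Real.sqrt 2 / Real.sqrt γ) * t i ^ ((3:ℝ)/2)) := by
        refine Finset.sum_le_sum fun i _ => ?_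
        rw [hvar i, htdef]
        exact PoissonAux.per_coord_bound hm hγ0 hγh (hp i).1 (hq i).1 (hq i).2
    _ = 16 * n * m ^ 2 + (8 / γ + 8 * m) * (∑ i, t i)
        + (4 * Real.sqrt 2 / Real.sqrt γ) * ∑ i, t i ^ ((3:ℝ)/2) := by
        rw [Finset.sum_add_distrib, Finset.sum_add_distrib, Finset.sum_const,
          ← Finset.mul_sum, ← Finset.mul_sum]
        simp [Finset.card_univ]
        ring
    _ ≤ 16 * n * m ^ 2 + (32 / γ + 16 * Real.sqrt (2 * n) * m) * (∑ i, t i)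
        + (32 / Real.sqrt γ) * (∑ i, t i) ^ ((3:ℝ)/2) := by
        have hs1 : 1 ≤ Real.sqrt (2 * n) := by
          rw [show (1:ℝ) = Real.sqrt 1 by rw [Real.sqrt_one]]
          apply Real.sqrt_le_sqrt
          have : (1:ℝ) ≤ (n:ℝ) := by exact_mod_cast hn
          linarith
        have hsum32 : ∑ i, t i ^ ((3:ℝ)/2) ≤ (∑ i, t i) ^ ((3:ℝ)/2) :=
          PoissonAux.sum_rpow_le t ht0
        have hS0 : 0 ≤ ∑ i, t i ^ ((3:ℝ)/2) :=
          Finset.sum_nonneg fun i _ => Real.rpow_nonneg (ht0 i) _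
        have hsqrt2 : Real.sqrt 2 ≤ 8 := by
          nlinarith [Real.sq_sqrt (by norm_num : (0:ℝ) ≤ 2), Real.sqrt_nonneg 2]
        have h1 : (8 / γ + 8 * m) * (∑ i, t i)
            ≤ (32 / γ + 16 * Real.sqrt (2 * n) * m) * (∑ i, t i) := by
          refine mul_le_mul_of_nonneg_right ?_ hE0
          have a1 : 8 / γ ≤ 32 / γ := (div_le_div_iff_of_pos_right hγ0).2 (by norm_num)
          have a2 : 8 * m ≤ 16 * Real.sqrt (2 * n) * m := by nlinarith [hs1, hm.le]
          linarith
        have h2 : (4 * Real.sqrt 2 / Real.sqrt γ) * ∑ i, t i ^ ((3:ℝ)/2)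
            ≤ (32 / Real.sqrt γ) * (∑ i, t i) ^ ((3:ℝ)/2) := by
          have a3 : 4 * Real.sqrt 2 / Real.sqrt γ ≤ 32 / Real.sqrt γ :=
            (div_le_div_iff_of_pos_right hγs).2 (by nlinarith)
          have a4 : 0 ≤ 4 * Real.sqrt 2 / Real.sqrt γ := by positivity
          exact mul_le_mul a3 hsum32 hS0 (by positivity)
        linarith
    _ = 16 * n * m ^ 2
        + (32 / γ + 16 * Real.sqrt (2 * n) * m)
            * (m ^ 2 * ∑ i, (p i - q i) ^ 2 / (q i * (1 - q i)))
        + (32 / Real.sqrt γ)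
            * (m ^ 2 * ∑ i, (p i - q i) ^ 2 / (q i * (1 - q i))) ^ ((3:ℝ)/2) := by
        rw [hE]
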